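/- Let k ≥ 2 be an integer and let F be a forest (a finite simple acyclic graph) on n vertices with n^{1/3} ≥ 2k − 1 (real cube root). Then f_k(F) ≤ (2k − 1)·⌊n^{1/3}⌋. -/

import Mathlib

open Finset

variable {V : Type*}

open scoped Classical in
/-- Degree of `v` in the subgraph of `G` induced on the vertex set `A`
(number of neighbours of `v` inside `A`). -/
noncomputable def degOn (G : SimpleGraph V) (A : Finset V) (v : V) : ℕ :=
  (A.filter fun w => G.Adj v w).card

/-- Maximum degree of the subgraph of `G` induced on `A`. -/
noncomputable def maxDegOn (G : SimpleGraph V) (A : Finset V) : ℕ :=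
  A.sup (degOn G A)

open scoped Classical in
/-- The subgraph of `G` induced on `A` has fewer than `k` vertices or at least `k`
vertices realising its maximum degree. -/
def equates (G : SimpleGraph V) (k : ℕ) (A : Finset V) : Prop :=
  A.card < k ∨ k ≤ (A.filter fun v => degOn G A v = maxDegOn G A).card

open scoped Classical in
/-- `f_k` of the subgraph of `G` induced on `A`: the minimum number of vertices of `A`
whose deletion leaves an induced subgraph with fewer than `k` vertices or with at
least `k` vertices realising its maximum degree. -/
noncomputable def fkOn (G : SimpleGraph V) (k : ℕ) (A : Finset V) : ℕ :=
  sInf {m | ∃ S, S ⊆ A ∧ S.card = m ∧ equates G k (A \ S)}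

/-- `f_k(G)`. -/
noncomputable def fk [Fintype V] (G : SimpleGraph V) (k : ℕ) : ℕ :=
  fkOn G k Finset.univ

/-- `diff` of the subgraph of `G` induced on `A`: the largest degree minus the
second-largest degree (with multiplicity) of this subgraph. -/
noncomputable def diffOn (G : SimpleGraph V) (A : Finset V) : ℕ :=
  maxDegOn G A - ((A.val.map (degOn G A)).erase (maxDegOn G A)).sup

/-- `diff(G) = d₁ - d₂`, the difference between the largest and second-largest
vertex degrees of `G`. -/
noncomputable def diffDeg [Fintype V] (G : SimpleGraph V) : ℕ :=
  diffOn G Finset.univ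

namespace Stmt11Aux

open scoped Classical
open SimpleGraph

/-- Sum of degrees of the induced subgraph on `A`. -/
noncomputable def SD (G : SimpleGraph V) (A : Finset V) : ℕ := ∑ v ∈ A, degOn G A v

/-- There is a deletion set of size at most `b` making the induced graph equate. -/
def goodOn (G : SimpleGraph V) (k : ℕ) (A : Finset V) (b : ℕ) : Prop :=
  ∃ S : Finset V, S ⊆ A ∧ S.card ≤ b ∧ equates G k (A \ S)

/-- `k`-th largest degree of the induced subgraph on `A`. -/
noncomputable def crank (G : SimpleGraph V) (j : ℕ) (A : Finset V) : ℕ :=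
  Nat.findGreatest (fun m => j ≤ (A.filter fun v => m ≤ degOn G A v).card) A.card

variable {G : SimpleGraph V} {k : ℕ} {A B : Finset V} {v x : V}

lemma degOn_mono (h : A ⊆ B) (v : V) : degOn G A v ≤ degOn G B v := by
  classical
  exact Finset.card_le_card (Finset.filter_subset_filter _ h)

lemma degOn_le_card : degOn G A v ≤ A.card :=
  Finset.card_le_card (Finset.filter_subset _ _)

lemma degOn_lt_card (hv : v ∈ A) : degOn G A v < A.card := by
  classical
  have h1 : (A.filter fun w => G.Adj v w) ⊆ A.erase v := by
    intro w hw
    simp only [Finset.mem_filter] at hw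
    exact Finset.mem_erase.2 ⟨fun h => G.irrefl (h ▸ hw.2), hw.1⟩
  calc degOn G A v ≤ (A.erase v).card := Finset.card_le_card h1
    _ < A.card := Finset.card_lt_card (Finset.erase_ssubset hv)

lemma filter_adj_erase : ((A.erase x).filter fun w => G.Adj v w)
    = (A.filter fun w => G.Adj v w).erase x := by
  classical
  ext w
  simp only [Finset.mem_filter, Finset.mem_erase]
  tauto

lemma degOn_erase_le : degOn G A v ≤ degOn G (A.erase x) v + 1 := by
  classical
  unfold degOn
  rw [filter_adj_erase]
  by_cases hxs : x ∈ (A.filter fun w => G.Adj v w)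
  · rw [Finset.card_erase_add_one hxs]
  · rw [Finset.erase_eq_of_notMem hxs]
    exact Nat.le_succ _

lemma degOn_erase_of_not_adj (h : ¬ G.Adj v x) : degOn G (A.erase x) v = degOn G A v := by
  classical
  unfold degOn
  rw [filter_adj_erase, Finset.erase_eq_of_notMem]
  simp only [Finset.mem_filter]
  tauto

lemma degOn_erase_of_adj (hx : x ∈ A) (h : G.Adj v x) :
    degOn G (A.erase x) v + 1 = degOn G A v := by
  classical
  unfold degOn
  rw [filter_adj_erase, Finset.card_erase_of_mem (Finset.mem_filter.2 ⟨hx, h⟩)]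
  have : x ∈ A.filter fun w => G.Adj v w := Finset.mem_filter.2 ⟨hx, h⟩
  have hpos : 0 < (A.filter fun w => G.Adj v w).card := Finset.card_pos.2 ⟨x, this⟩
  exact Nat.succ_pred_eq_of_pos hpos

lemma SD_erase (hx : x ∈ A) : SD G A = SD G (A.erase x) + 2 * degOn G A x := by
  classical
  have hsplit : SD G A = degOn G A x + ∑ v ∈ A.erase x, degOn G A v := by
    unfold SD
    rw [← Finset.add_sum_erase _ _ hx]
  have hpt : ∀ v ∈ A.erase x, degOn G A v
      = degOn G (A.erase x) v + (if G.Adj v x then 1 else 0) := by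
    intro v _
    by_cases h : G.Adj v x
    · rw [if_pos h, degOn_erase_of_adj hx h]
    · rw [if_neg h, degOn_erase_of_not_adj h, add_zero]
  have hsum : ∑ v ∈ A.erase x, degOn G A v
      = SD G (A.erase x) + ∑ v ∈ A.erase x, (if G.Adj v x then 1 else 0) := by
    rw [Finset.sum_congr rfl hpt, Finset.sum_add_distrib]
    rfl
  have hcnt : ∑ v ∈ A.erase x, (if G.Adj v x then 1 else 0) = degOn G A x := by
    rw [← Finset.card_filter]
    unfold degOn
    congr 1
    ext w
    simp only [Finset.mem_filter, Finset.mem_erase]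
    constructor
    · rintro ⟨⟨hwx, hwA⟩, hadj⟩
      exact ⟨hwA, hadj.symm⟩
    · rintro ⟨hwA, hadj⟩
      exact ⟨⟨G.ne_of_adj hadj.symm, hwA⟩, hadj.symm⟩
  rw [hsplit, hsum, hcnt]
  ring

lemma degOn_le_maxDegOn (hv : v ∈ A) : degOn G A v ≤ maxDegOn G A := Finset.le_sup hv

lemma exists_maxDegOn (hA : A.Nonempty) : ∃ v ∈ A, degOn G A v = maxDegOn G A := by
  obtain ⟨v, hv, h⟩ := Finset.exists_mem_eq_sup A hA (degOn G A)
  exact ⟨v, hv, h.symm⟩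

lemma equates_of_forall_eq (W : Finset V) (hWA : W ⊆ A) (hk : k ≤ W.card)
    (h : ∀ w ∈ W, degOn G A w = maxDegOn G A) : equates G k A := by
  classical
  right
  refine hk.trans (Finset.card_le_card ?_)
  intro w hw
  exact Finset.mem_filter.2 ⟨hWA hw, h w hw⟩

lemma goodOn_of_equates (h : equates G k A) (b : ℕ) : goodOn G k A b := by
  classical
  exact ⟨∅, Finset.empty_subset _, by simp, by simpa using h⟩

lemma goodOn_step (hx : x ∈ A) {b : ℕ} (h : goodOn G k (A.erase x) b) :
    goodOn G k A (b + 1) := by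
  classical
  obtain ⟨S, h1, h2, h3⟩ := h
  have hxS : x ∉ S := fun hxx => (Finset.mem_erase.1 (h1 hxx)).1 rfl
  refine ⟨insert x S, ?_, ?_, ?_⟩
  · intro y hy
    rcases Finset.mem_insert.1 hy with rfl | hy
    · exact hx
    · exact (Finset.erase_subset _ _) (h1 hy)
  · rw [Finset.card_insert_of_notMem hxS]; omega
  · have : A \ insert x S = A.erase x \ S := by
      ext y
      simp only [Finset.mem_sdiff, Finset.mem_insert, Finset.mem_erase]
      tauto
    rwa [this]

lemma goodOn_union (D : Finset V) (hD : D ⊆ A) {b : ℕ} (h : goodOn G k (A \ D) b) :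
    goodOn G k A (D.card + b) := by
  classical
  obtain ⟨S, h1, h2, h3⟩ := h
  refine ⟨D ∪ S, ?_, ?_, ?_⟩
  · intro y hy
    rcases Finset.mem_union.1 hy with hy | hy
    · exact hD hy
    · exact (Finset.sdiff_subset) (h1 hy)
  · exact (Finset.card_union_le _ _).trans (by omega)
  · have : A \ (D ∪ S) = (A \ D) \ S := by
      ext y
      simp only [Finset.mem_sdiff, Finset.mem_union]
      tauto
    rwa [this]

lemma goodOn_mono {b b' : ℕ} (hb : b ≤ b') (h : goodOn G k A b) : goodOn G k A b' := by
  obtain ⟨S, h1, h2, h3⟩ := h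
  exact ⟨S, h1, h2.trans hb, h3⟩

lemma no_closing_edge : ∀ {u w : V} (q : G.Walk u w), q.IsPath → 2 ≤ q.length →
    s(w,u) ∉ q.edges := by
  intro u w q hq hlen hmem
  cases q with
  | nil => simp at hlen
  | cons h' q' =>
    rw [SimpleGraph.Walk.edges_cons, List.mem_cons] at hmem
    rcases hmem with hmem | hmem
    · rw [Sym2.eq_iff] at hmem
      rcases hmem with ⟨rfl, rfl⟩ | ⟨hwx, -⟩
      · -- w = u and u = x : q' is a path from u to u, hence nil, length 1
        have : q' = SimpleGraph.Walk.nil := by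
          rw [← SimpleGraph.Walk.isPath_iff_eq_nil]
          exact hq.of_cons
        subst this
        simp at hlen
      · -- w = x
        subst hwx
        have : q' = SimpleGraph.Walk.nil := by
          rw [← SimpleGraph.Walk.isPath_iff_eq_nil]
          exact hq.of_cons
        subst this
        simp at hlen
    · have huq : u ∈ q'.support := SimpleGraph.Walk.snd_mem_support_of_mem_edges q' hmem
      have := hq.support_nodup
      rw [SimpleGraph.Walk.support_cons, List.nodup_cons] at this
      exact this.1 huq

/-- the minimum-degree-two contradiction for forests -/
lemma not_min_degree_two (hF : G.IsAcyclic) (hA : A.Nonempty)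
    (h2 : ∀ v ∈ A, 2 ≤ degOn G A v) : False := by
  classical
  set L : ℕ → Prop := fun ℓ => ∃ (u v : V) (p : G.Walk u v), p.IsPath ∧
    (∀ x ∈ p.support, x ∈ A) ∧ p.length = ℓ with hLdef
  have hbound : ∀ ℓ, L ℓ → ℓ + 1 ≤ A.card := by
    rintro ℓ ⟨u, v, p, hp, hsupp, hlen⟩
    have h1 : p.support.toFinset ⊆ A := fun x hx => hsupp x (List.mem_toFinset.1 hx)
    have h2' : p.support.toFinset.card = p.support.length :=
      List.toFinset_card_of_nodup hp.support_nodup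
    have h3 : p.support.length = ℓ + 1 := by
      rw [SimpleGraph.Walk.length_support, hlen]
    calc ℓ + 1 = p.support.toFinset.card := by rw [h2', h3]
      _ ≤ A.card := Finset.card_le_card h1
  have hL0 : L 0 := by
    obtain ⟨v, hv⟩ := hA
    refine ⟨v, v, SimpleGraph.Walk.nil, SimpleGraph.Walk.IsPath.nil, ?_, rfl⟩
    intro x hx
    simp only [SimpleGraph.Walk.support_nil, List.mem_singleton] at hx
    exact hx ▸ hv
  set ℓm := Nat.findGreatest L A.card with hlm
  have hLmax : L ℓm := Nat.findGreatest_spec (Nat.zero_le _) hL0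
  have hgt : ∀ m, ℓm < m → ¬ L m := by
    intro m hm hLm
    by_cases hmb : m ≤ A.card
    · exact Nat.findGreatest_is_greatest hm hmb hLm
    · have := hbound m hLm
      omega
  obtain ⟨u, v, p, hp, hsupp, hlen⟩ := hLmax
  have huA : u ∈ A := hsupp u p.start_mem_support
  have hN : 2 ≤ (A.filter fun w => G.Adj u w).card := h2 u huA
  obtain ⟨w₁, hw₁, w₂, hw₂, hww⟩ := Finset.one_lt_card.1 hN
  obtain ⟨hw₁A, hw₁adj⟩ := Finset.mem_filter.1 hw₁
  obtain ⟨hw₂A, hw₂adj⟩ := Finset.mem_filter.1 hw₂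
  have hmem : ∀ w, w ∈ A → G.Adj u w → w ∈ p.support := by
    intro w hwA hadj
    by_contra hnot
    have hp' : (SimpleGraph.Walk.cons hadj.symm p).IsPath := hp.cons hnot
    apply hgt (ℓm + 1) (by omega)
    refine ⟨w, v, _, hp', ?_, by simp [hlen]⟩
    intro x hx
    rw [SimpleGraph.Walk.support_cons, List.mem_cons] at hx
    rcases hx with rfl | hx
    · exact hwA
    · exact hsupp x hx
  have hw₁s : w₁ ∈ p.support := hmem w₁ hw₁A hw₁adj
  have hw₂s : w₂ ∈ p.support := hmem w₂ hw₂A hw₂adj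
  have hlen1 : ∀ w (hws : w ∈ p.support), G.Adj u w → 1 ≤ (p.takeUntil w hws).length := by
    intro w hws hadj
    by_contra hl
    have h0 : (p.takeUntil w hws).length = 0 := by omega
    exact G.ne_of_adj hadj (SimpleGraph.Walk.eq_of_length_eq_zero h0)
  have hkey : ∀ w (hws : w ∈ p.support), (p.takeUntil w hws).length = 1 →
      p.getVert 1 = w := by
    intro w hws hl
    conv_lhs => rw [← p.take_spec hws]
    rw [SimpleGraph.Walk.getVert_append]
    rw [hl]
    simp
  have h2le : 2 ≤ (p.takeUntil w₁ hw₁s).length ∨ 2 ≤ (p.takeUntil w₂ hw₂s).length := by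
    by_contra hcon
    push_neg at hcon
    have e1 : (p.takeUntil w₁ hw₁s).length = 1 := by
      have := hlen1 w₁ hw₁s hw₁adj; omega
    have e2 : (p.takeUntil w₂ hw₂s).length = 1 := by
      have := hlen1 w₂ hw₂s hw₂adj; omega
    exact hww ((hkey w₁ hw₁s e1) ▸ (hkey w₂ hw₂s e2))
  have hcycle : ∀ w (hws : w ∈ p.support), G.Adj u w →
      2 ≤ (p.takeUntil w hws).length → False := by
    intro w hws hadj hl2
    set q := p.takeUntil w hws with hq
    have hqpath : q.IsPath := hp.takeUntil hws
    have hnotedge : s(w, u) ∉ q.edges := no_closing_edge q hqpath hl2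
    have hcyc : (SimpleGraph.Walk.cons hadj.symm q).IsCycle := by
      rw [SimpleGraph.Walk.cons_isCycle_iff]
      exact ⟨hqpath, hnotedge⟩
    exact hF _ hcyc
  rcases h2le with h | h
  · exact hcycle w₁ hw₁s hw₁adj h
  · exact hcycle w₂ hw₂s hw₂adj h

/-- sum of degrees bound for forests -/
lemma SD_le (hF : G.IsAcyclic) (hA : A.Nonempty) : SD G A + 2 ≤ 2 * A.card := by
  classical
  suffices H : ∀ (n : ℕ) (A : Finset V), A.card = n → A.Nonempty → SD G A + 2 ≤ 2 * A.card by
    exact H A.card A rfl hA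
  intro n
  induction n using Nat.strong_induction_on with
  | _ n ih =>
    intro A hcard hne
    by_cases hdeg : ∃ v ∈ A, degOn G A v ≤ 1
    · obtain ⟨v, hv, hdv⟩ := hdeg
      by_cases h1 : A.card = 1
      · obtain ⟨a, ha⟩ := Finset.card_eq_one.1 h1
        subst ha
        have : SD G {a} = 0 := by
          unfold SD degOn
          simp only [Finset.sum_singleton]
          rw [Finset.card_eq_zero, Finset.filter_eq_empty_iff]
          intro w hw
          rw [Finset.mem_singleton] at hw
          subst hw
          exact fun h => G.irrefl h
        omega
      · have hcard2 : 2 ≤ A.card := by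
          have := Finset.card_pos.2 hne
          omega
        set A' := A.erase v with hA'
        have hA'ne : A'.Nonempty := by
          rw [← Finset.card_pos, hA', Finset.card_erase_of_mem hv]
          omega
        have hA'card : A'.card = n - 1 := by
          rw [hA', Finset.card_erase_of_mem hv, hcard]
        have hih := ih (n-1) (by omega) A' hA'card hA'ne
        have hSD := SD_erase (G := G) hv
        rw [← hA'] at hSD
        rw [hA'card] at hih
        have hAc : A'.card = A.card - 1 := by omega
        omega
    · push_neg at hdeg
      exact absurd (fun v hv => by have := hdeg v hv; omega) 
        (fun h => not_min_degree_two hF hne h)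

lemma crank_spec {j : ℕ} (hj : j ≤ A.card) :
    j ≤ (A.filter fun v => crank G j A ≤ degOn G A v).card := by
  classical
  have h0 : j ≤ (A.filter fun v => 0 ≤ degOn G A v).card := by
    have : (A.filter fun v => 0 ≤ degOn G A v) = A := by
      apply Finset.filter_true_of_mem
      intro v _
      exact Nat.zero_le _
    rw [this]; exact hj
  exact Nat.findGreatest_spec (P := fun m => j ≤ (A.filter fun v => m ≤ degOn G A v).card)
    (Nat.zero_le _) h0

lemma crank_lt {j m : ℕ} (hj : 1 ≤ j) (h : crank G j A < m) :
    (A.filter fun v => m ≤ degOn G A v).card < j := by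
  classical
  by_cases hm : m ≤ A.card
  · have := Nat.findGreatest_is_greatest (P := fun m => j ≤ (A.filter fun v => m ≤ degOn G A v).card)
      h hm
    omega
  · have : (A.filter fun v => m ≤ degOn G A v) = ∅ := by
      apply Finset.filter_false_of_mem
      intro v hv
      have := degOn_lt_card (G := G) hv
      omega
    rw [this]
    simp only [Finset.card_empty]; omega

lemma crank_erase_max {j : ℕ} (hj : 1 ≤ j) (hx : x ∈ A)
    (hach : degOn G A x = maxDegOn G A) :
    crank G j (A.erase x) ≤ crank G (j+1) A := by
  classical
  set m := crank G j (A.erase x) with hm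
  rcases Nat.eq_zero_or_pos m with h0 | hpos
  · omega
  have hjcard : j ≤ (A.erase x).card := by
    by_contra hgt
    push_neg at hgt
    have : ∀ mm, ¬ (j ≤ ((A.erase x).filter fun v => mm ≤ degOn G (A.erase x) v).card) := by
      intro mm h
      have := Finset.card_le_card (Finset.filter_subset
        (fun v => mm ≤ degOn G (A.erase x) v) (A.erase x))
      omega
    have : m = 0 := by
      rw [hm]
      unfold crank
      rw [Nat.findGreatest_eq_zero_iff]
      intro mm _ _ h
      exact this mm h
    omega
  have hY' : j ≤ ((A.erase x).filter fun v => m ≤ degOn G (A.erase x) v).card :=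
    crank_spec hjcard
  set Y' := (A.erase x).filter fun v => m ≤ degOn G (A.erase x) v with hY'def
  have hY'ne : Y'.Nonempty := by
    rw [← Finset.card_pos]; omega
  obtain ⟨v₀, hv₀⟩ := hY'ne
  have hv₀A : v₀ ∈ A := Finset.mem_of_mem_erase (Finset.mem_filter.1 hv₀).1
  have hv₀deg : m ≤ degOn G A v₀ := by
    have h1 := (Finset.mem_filter.1 hv₀).2
    have h2 : degOn G (A.erase x) v₀ ≤ degOn G A v₀ :=
      degOn_mono (Finset.erase_subset _ _) v₀
    omega
  have hxdeg : m ≤ degOn G A x := by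
    have := degOn_le_maxDegOn (G := G) hv₀A
    omega
  have hsub : insert x (Y'.image id) ⊆ A.filter fun v => m ≤ degOn G A v := by
    intro v hv
    rcases Finset.mem_insert.1 hv with rfl | hv
    · exact Finset.mem_filter.2 ⟨hx, hxdeg⟩
    · rw [Finset.image_id] at hv
      obtain ⟨h1, h2⟩ := Finset.mem_filter.1 hv
      have h3 : degOn G (A.erase x) v ≤ degOn G A v :=
        degOn_mono (Finset.erase_subset _ _) v
      exact Finset.mem_filter.2 ⟨Finset.mem_of_mem_erase h1, by omega⟩
  have hxY : x ∉ Y'.image id := by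
    rw [Finset.image_id]
    intro h
    exact (Finset.mem_erase.1 (Finset.mem_filter.1 h).1).1 rfl
  have hcard : j + 1 ≤ (A.filter fun v => m ≤ degOn G A v).card := by
    calc j + 1 ≤ Y'.card + 1 := by omega
      _ = (insert x (Y'.image id)).card := by
          rw [Finset.card_insert_of_notMem hxY, Finset.image_id]
      _ ≤ (A.filter fun v => m ≤ degOn G A v).card := Finset.card_le_card hsub
  have hmb : m ≤ A.card := by
    have h1 : m ≤ (A.erase x).card := Nat.findGreatest_le _
    have h2 := Finset.card_erase_le (s := A) (a := x)
    omega
  exact Nat.le_findGreatest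
    (P := fun mm => j + 1 ≤ (A.filter fun v => mm ≤ degOn G A v).card) hmb hcard

lemma crank_erase_unused {j : ℕ} (hj : 1 ≤ j) (hj2 : j + 1 ≤ A.card) (hx : x ∈ A) :
    crank G (j+1) A ≤ crank G j (A.erase x) + 1 := by
  classical
  set m := crank G (j+1) A with hm
  rcases Nat.eq_zero_or_pos m with h0 | hpos
  · omega
  have hY : j + 1 ≤ (A.filter fun v => m ≤ degOn G A v).card := crank_spec hj2
  set Y := A.filter fun v => m ≤ degOn G A v with hYdef
  have hsub : Y.erase x ⊆ (A.erase x).filter fun v => m - 1 ≤ degOn G (A.erase x) v := by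
    intro v hv
    obtain ⟨hvx, hvY⟩ := Finset.mem_erase.1 hv
    obtain ⟨hvA, hvd⟩ := Finset.mem_filter.1 hvY
    refine Finset.mem_filter.2 ⟨Finset.mem_erase.2 ⟨hvx, hvA⟩, ?_⟩
    have := degOn_erase_le (G := G) (A := A) (v := v) (x := x)
    omega
  have hcard : j ≤ (Y.erase x).card := by
    have := Finset.card_erase_le (s := Y) (a := x)
    have h2 := Finset.pred_card_le_card_erase (s := Y) (a := x)
    omega
  have hP : j ≤ ((A.erase x).filter fun v => m - 1 ≤ degOn G (A.erase x) v).card :=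
    hcard.trans (Finset.card_le_card hsub)
  have hmb : m - 1 ≤ (A.erase x).card := by
    have h1 : m ≤ A.card := Nat.findGreatest_le _
    have h2 : x ∈ A := hx
    have := Finset.card_erase_of_mem h2
    omega
  have : m - 1 ≤ crank G j (A.erase x) :=
    Nat.le_findGreatest (P := fun mm => j ≤ ((A.erase x).filter
      fun v => mm ≤ degOn G (A.erase x) v).card) hmb hP
  omega

lemma maxDegOn_le_crank_one (hA : A.Nonempty) : maxDegOn G A ≤ crank G 1 A := by
  classical
  obtain ⟨v, hv, hvd⟩ := exists_maxDegOn hA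
  have hP : 1 ≤ (A.filter fun w => maxDegOn G A ≤ degOn G A w).card := by
    refine Finset.card_pos.2 ⟨v, Finset.mem_filter.2 ⟨hv, le_of_eq hvd.symm⟩⟩
  have hmb : maxDegOn G A ≤ A.card := by
    rw [← hvd]
    exact degOn_le_card
  exact Nat.le_findGreatest (P := fun m => 1 ≤ (A.filter fun w => m ≤ degOn G A w).card) hmb hP

/-- The loop strategy: delete all max-degree vertices repeatedly. -/
lemma loop (hk : 2 ≤ k) : ∀ (Δ : ℕ) (A : Finset V), (∀ v ∈ A, degOn G A v ≤ Δ) →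
    (k-1) * Δ + k ≤ A.card → goodOn G k A ((k-1) * Δ) := by
  classical
  intro Δ
  induction Δ with
  | zero =>
    intro A hdeg hcard
    apply goodOn_of_equates
    apply equates_of_forall_eq A (le_refl _) (by omega)
    intro w hw
    have h1 : degOn G A w = 0 := Nat.le_zero.1 (hdeg w hw)
    have h2 : maxDegOn G A = 0 := by
      apply Nat.le_zero.1
      apply Finset.sup_le
      intro v hv
      exact hdeg v hv
    omega
  | succ Δ ih =>
    intro A hdeg hcard
    set M := maxDegOn G A with hM
    set Ach := A.filter (fun v => degOn G A v = M) with hAch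
    by_cases hach : k ≤ Ach.card
    · apply goodOn_of_equates
      exact Or.inr hach
    have hAne : A.Nonempty := by
      rw [← Finset.card_pos]; omega
    have hM1 : 1 ≤ M := by
      by_contra h0
      have hM0 : M = 0 := by omega
      have : Ach = A := by
        apply Finset.filter_true_of_mem
        intro v hv
        have := degOn_le_maxDegOn (G := G) hv
        omega
      rw [this] at hach
      omega
    have hMle : M ≤ Δ + 1 := by
      obtain ⟨v, hv, hvd⟩ := exists_maxDegOn (G := G) hAne
      have := hdeg v hv
      omega
    have hAchA : Ach ⊆ A := Finset.filter_subset _ _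
    set A' := A \ Ach with hA'
    have hdeg' : ∀ v ∈ A', degOn G A' v ≤ Δ := by
      intro v hv
      obtain ⟨hvA, hvn⟩ := Finset.mem_sdiff.1 hv
      have h1 : degOn G A' v ≤ degOn G A v := degOn_mono Finset.sdiff_subset v
      have h2 : degOn G A v ≤ M := degOn_le_maxDegOn hvA
      have h3 : degOn G A v ≠ M := by
        intro hh
        exact hvn (Finset.mem_filter.2 ⟨hvA, hh⟩)
      omega
    have hcard' : (k-1) * Δ + k ≤ A'.card := by
      have h1 : A'.card = A.card - Ach.card := Finset.card_sdiff_of_subset hAchA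
      have h2 : Ach.card ≤ k - 1 := by omega
      have h3 : (k-1) * (Δ+1) = (k-1)*Δ + (k-1) := by ring
      omega
    obtain ⟨S, hS1, hS2, hS3⟩ := ih A' hdeg' hcard'
    refine ⟨Ach ∪ S, ?_, ?_, ?_⟩
    · intro y hy
      rcases Finset.mem_union.1 hy with hy | hy
      · exact hAchA hy
      · exact Finset.sdiff_subset (hS1 hy)
    · refine (Finset.card_union_le _ _).trans ?_
      have : Ach.card ≤ k - 1 := by omega
      have h3 : (k-1) * (Δ+1) = (k-1)*Δ + (k-1) := by ring
      omega
    · have : A \ (Ach ∪ S) = A' \ S := by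
        ext y
        simp only [Finset.mem_sdiff, Finset.mem_union, hA']
        tauto
      rwa [this]

lemma equates_of_level {W : Finset V} {τ : ℕ} (hk1 : 1 ≤ k) (hWA : W ⊆ A) (hWk : k ≤ W.card)
    (hhi : ∀ v ∈ A, v ∉ W → degOn G A v ≤ τ) (heq : ∀ w ∈ W, degOn G A w = τ) :
    equates G k A := by
  classical
  have hWne : W.Nonempty := by
    rw [← Finset.card_pos]; omega
  obtain ⟨w₀, hw₀⟩ := hWne
  have hmax : maxDegOn G A = τ := by
    apply le_antisymm
    · apply Finset.sup_le
      intro v hv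
      by_cases hvW : v ∈ W
      · exact le_of_eq (heq v hvW)
      · exact hhi v hv hvW
    · calc τ = degOn G A w₀ := (heq w₀ hw₀).symm
        _ ≤ maxDegOn G A := degOn_le_maxDegOn (hWA hw₀)
  apply equates_of_forall_eq W hWA hWk
  intro w hw
  rw [heq w hw, hmax]

/-- The trim strategy. -/
lemma trim (hF : G.IsAcyclic) (hk : 2 ≤ k) :
    ∀ (T : ℕ) (A W : Finset V) (τ : ℕ), W ⊆ A → W.card = k → 2*(k-1) ≤ τ →
    (∀ v ∈ A, v ∉ W → degOn G A v ≤ τ) → (∀ w ∈ W, τ ≤ degOn G A w) →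
    (∑ w ∈ W, (degOn G A w - τ)) ≤ T → goodOn G k A T := by
  classical
  intro T
  induction T with
  | zero =>
    intro A W τ hWA hWk hτ hhi hlo hsum
    apply goodOn_of_equates
    apply equates_of_level (by omega) hWA (le_of_eq hWk.symm) hhi
    intro w hw
    have h1 : degOn G A w - τ = 0 := by
      have := Finset.sum_eq_zero_iff.1 (Nat.le_zero.1 hsum) w hw
      exact this
    have h2 := hlo w hw
    omega
  | succ T ih =>
    intro A W τ hWA hWk hτ hhi hlo hsum
    by_cases hs : ∑ w ∈ W, (degOn G A w - τ) = 0
    · apply goodOn_of_equates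
      apply equates_of_level (by omega) hWA (le_of_eq hWk.symm) hhi
      intro w hw
      have h1 := Finset.sum_eq_zero_iff.1 hs w hw
      have h2 := hlo w hw
      omega
    · obtain ⟨w', hw'W, hw'⟩ := Finset.exists_ne_zero_of_sum_ne_zero hs
      have hd1 : τ + 1 ≤ degOn G A w' := by
        have := hlo w' hw'W
        omega
      set N := A.filter (fun u => G.Adj w' u) with hN
      have hNcard : N.card = degOn G A w' := rfl
      have hNsubA : N ⊆ A := Finset.filter_subset _ _
      have hadjN : ∀ u ∈ N, G.Adj w' u := by
        intro u hu; exact (Finset.mem_filter.1 hu).2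
      have hw'N : w' ∉ N := by
        intro h
        exact G.irrefl (hadjN w' h)
      set C := N.filter (fun u => ∃ w ∈ W.erase w', G.Adj w u) with hC
      -- the common-neighbour injection
      have hCcard : C.card ≤ k - 1 := by
        have hinj : ∀ u ∈ C, ∀ u' ∈ C,
            (fun u => if h : ∃ w ∈ W.erase w', G.Adj w u then h.choose else w') u =
            (fun u => if h : ∃ w ∈ W.erase w', G.Adj w u then h.choose else w') u' → u = u' := by
          intro u hu u' hu' hfe
          by_contra hne
          obtain ⟨huN, hex⟩ := Finset.mem_filter.1 hu
          obtain ⟨hu'N, hex'⟩ := Finset.mem_filter.1 hu'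
          simp only [dif_pos hex, dif_pos hex'] at hfe
          obtain ⟨hw₀mem, hw₀adj⟩ := hex.choose_spec
          obtain ⟨hw₀mem', hw₀adj'⟩ := hex'.choose_spec
          set w₀ := hex.choose with hw₀def
          rw [← hfe] at hw₀adj'
          -- two distinct length-2 paths from w' to w₀
          have hadj1 : G.Adj w' u := hadjN u huN
          have hadj1' : G.Adj w' u' := hadjN u' hu'N
          have hne1 : w' ≠ u := G.ne_of_adj hadj1
          have hne1' : w' ≠ u' := G.ne_of_adj hadj1'
          have hne2 : u ≠ w₀ := fun h => G.irrefl (h ▸ hw₀adj)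
          have hne2' : u' ≠ w₀ := fun h => G.irrefl (h ▸ hw₀adj')
          have hne3 : w' ≠ w₀ := fun h => (Finset.mem_erase.1 hw₀mem).1 h.symm
          have hp1 : (SimpleGraph.Walk.cons hadj1
              (SimpleGraph.Walk.cons hw₀adj.symm SimpleGraph.Walk.nil)).IsPath := by
            simp [SimpleGraph.Walk.isPath_def, hne1, hne2, hne3]
          have hp2 : (SimpleGraph.Walk.cons hadj1'
              (SimpleGraph.Walk.cons hw₀adj'.symm SimpleGraph.Walk.nil)).IsPath := by
            simp [SimpleGraph.Walk.isPath_def, hne1', hne2', hne3]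
          have := hF.path_unique ⟨_, hp1⟩ ⟨_, hp2⟩
          have hsupp := congrArg (fun q : G.Path w' w₀ => (q : G.Walk w' w₀).support) this
          simp only [SimpleGraph.Walk.support_cons, SimpleGraph.Walk.support_nil] at hsupp
          apply hne
          simp only [List.cons.injEq] at hsupp
          tauto
        have := Finset.card_le_card_of_injOn _ (fun u hu => by
          obtain ⟨huN, hex⟩ := Finset.mem_filter.1 hu
          simp only [dif_pos hex]
          exact hex.choose_spec.1) hinj
        rw [Finset.card_erase_of_mem hw'W, hWk] at this
        exact this
      -- pick a victim
      have hvict : (N \ (W ∪ C)).Nonempty := by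
        by_contra hempty
        rw [Finset.not_nonempty_iff_eq_empty, Finset.sdiff_eq_empty_iff_subset] at hempty
        have hsub2 : N ⊆ (W.erase w') ∪ C := by
          intro u hu
          rcases Finset.mem_union.1 (hempty hu) with h | h
          · exact Finset.mem_union_left _ (Finset.mem_erase.2
              ⟨fun he => hw'N (he ▸ hu), h⟩)
          · exact Finset.mem_union_right _ h
        have hcard2 : N.card ≤ (k-1) + (k-1) := by
          calc N.card ≤ ((W.erase w') ∪ C).card := Finset.card_le_card hsub2
            _ ≤ (W.erase w').card + C.card := Finset.card_union_le _ _
            _ ≤ (k-1) + (k-1) := by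
                rw [Finset.card_erase_of_mem hw'W, hWk]
                omega
        omega
      obtain ⟨u, hu⟩ := hvict
      obtain ⟨huN, huWC⟩ := Finset.mem_sdiff.1 hu
      have huW : u ∉ W := fun h => huWC (Finset.mem_union_left _ h)
      have huC : u ∉ C := fun h => huWC (Finset.mem_union_right _ h)
      have huA : u ∈ A := hNsubA huN
      have hadju : G.Adj w' u := hadjN u huN
      have hnoadj : ∀ w ∈ W, w ≠ w' → ¬ G.Adj w u := by
        intro w hw hne hadj
        exact huC (Finset.mem_filter.2 ⟨huN, ⟨w, Finset.mem_erase.2 ⟨hne, hw⟩, hadj⟩⟩)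
      set A' := A.erase u with hA'
      have hWA' : W ⊆ A' := by
        intro w hw
        exact Finset.mem_erase.2 ⟨fun he => huW (he ▸ hw), hWA hw⟩
      have hdegw' : degOn G A' w' + 1 = degOn G A w' := degOn_erase_of_adj huA hadju
      have hdegsame : ∀ w ∈ W, w ≠ w' → degOn G A' w = degOn G A w := by
        intro w hw hne
        exact degOn_erase_of_not_adj (hnoadj w hw hne)
      have hhi' : ∀ v ∈ A', v ∉ W → degOn G A' v ≤ τ := by
        intro v hv hvW
        calc degOn G A' v ≤ degOn G A v := degOn_mono (Finset.erase_subset _ _) v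
          _ ≤ τ := hhi v (Finset.mem_of_mem_erase hv) hvW
      have hlo' : ∀ w ∈ W, τ ≤ degOn G A' w := by
        intro w hw
        by_cases hne : w = w'
        · subst hne
          omega
        · rw [hdegsame w hw hne]
          exact hlo w hw
      have hsum' : (∑ w ∈ W, (degOn G A' w - τ)) ≤ T := by
        have e1 : ∑ w ∈ W, (degOn G A w - τ)
            = (degOn G A w' - τ) + ∑ w ∈ W.erase w', (degOn G A w - τ) :=
          (Finset.add_sum_erase _ _ hw'W).symm
        have e2 : ∑ w ∈ W, (degOn G A' w - τ)
            = (degOn G A' w' - τ) + ∑ w ∈ W.erase w', (degOn G A' w - τ) :=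
          (Finset.add_sum_erase _ _ hw'W).symm
        have e3 : ∑ w ∈ W.erase w', (degOn G A' w - τ)
            = ∑ w ∈ W.erase w', (degOn G A w - τ) := by
          apply Finset.sum_congr rfl
          intro w hw
          obtain ⟨hne, hwW⟩ := Finset.mem_erase.1 hw
          rw [hdegsame w hwW hne]
        omega
      have hgood' := ih A' W τ hWA' hWk hτ hhi' hlo' hsum'
      exact goodOn_step huA hgood'

def theta (P u : ℕ) : ℕ := (u - (2*P^2 + P)) * (u - P^2)

noncomputable def sumTheta (P m : ℕ) : ℕ := ∑ u ∈ Finset.range m, theta P (u+1)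

lemma theta_step {P u : ℕ} (hP : 1 ≤ P) (hu : 2*P^2 + P < u) :
    theta P u + 2*P^3 ≤ theta P (u - P) + 2*P*u := by
  unfold theta
  obtain ⟨q, hq⟩ : ∃ q, P^2 = q := ⟨_, rfl⟩
  have hq1 : 1 ≤ q := by
    rw [← hq]
    exact Nat.one_le_pow _ _ (by omega)
  have hr : P^3 = P * q := by rw [← hq]; ring
  rw [hq] at hu
  rw [hq, hr]
  rcases le_or_gt (2*q + 2*P) u with hbig | hsmall
  · zify [show 2*q+P ≤ u by omega, show P ≤ u by omega, show 2*q+P ≤ u - P by omega,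
      show q ≤ u - P by omega, show q ≤ u by omega]
    nlinarith [hq1, hP]
  · have hz : u - P - (2*q + P) = 0 := by omega
    rw [hz, Nat.zero_mul, Nat.zero_add]
    zify [show 2*q+P ≤ u by omega, show q ≤ u by omega]
    have ha : (u:ℤ) - (2*q+P) ≤ P - 1 := by
      push_cast
      omega
    have ha2 : (1:ℤ) ≤ (u:ℤ) - (2*q+P) := by
      push_cast
      omega
    nlinarith [hq1, hP, ha, ha2, mul_le_mul_of_nonneg_right ha
      (by push_cast; omega : (0:ℤ) ≤ (u:ℤ) - q)]

lemma sumTheta_succ (P m : ℕ) : sumTheta P (m+1) = sumTheta P m + theta P (m+1) := by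
  unfold sumTheta
  rw [Finset.sum_range_succ]

lemma sumTheta_ge (P Q : ℕ) :
    Q*(Q+1)*(2*Q+1) + 3*(P^2+P)*Q*(Q+1) ≤ 6 * sumTheta P (2*P^2 + P + Q) := by
  obtain ⟨q, hq⟩ : ∃ q, P^2 = q := ⟨_, rfl⟩
  induction Q with
  | zero => simp
  | succ Q ih =>
    have hstep : sumTheta P (2*P^2 + P + (Q+1)) = sumTheta P (2*P^2 + P + Q)
        + theta P (2*P^2 + P + Q + 1) := by
      have : 2*P^2 + P + (Q+1) = (2*P^2 + P + Q) + 1 := by omega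
      rw [this, sumTheta_succ]
    have hth : theta P (2*P^2 + P + Q + 1) = (Q+1) * (P^2 + P + Q + 1) := by
      unfold theta
      rw [hq]
      have e1 : 2*q + P + Q + 1 - (2*q + P) = Q+1 := by omega
      have e2 : 2*q + P + Q + 1 - q = q + P + Q + 1 := by omega
      rw [e1, e2]
    have hident : (Q+1)*((Q+1)+1)*(2*(Q+1)+1) + 3*(P^2+P)*(Q+1)*((Q+1)+1)
        = Q*(Q+1)*(2*Q+1) + 3*(P^2+P)*Q*(Q+1) + 6*((Q+1) * (P^2 + P + Q + 1)) := by
      ring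
    rw [hstep, hth]
    linarith [ih, hident]

lemma iter (hk : 2 ≤ k) : ∀ (i : ℕ), i ≤ k - 1 → ∀ (b : ℕ) (A : Finset V),
    ¬ goodOn G k A b → i ≤ b → k ≤ A.card →
    ∃ A', A' ⊆ A ∧ A'.card + i = A.card ∧ ¬ goodOn G k A' (b - i) ∧
      crank G (k - i) A' ≤ crank G k A := by
  classical
  intro i
  induction i with
  | zero =>
    intro _ b A hng _ _
    exact ⟨A, Finset.Subset.refl _, by omega, by simpa using hng, by simp⟩
  | succ i ih =>
    intro hik b A hng hib hkA
    obtain ⟨A', hsub, hcard, hng', hcr⟩ := ih (by omega) b A hng (by omega) hkA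
    have hA'card : k - i ≤ A'.card := by omega
    have hA'ne : A'.Nonempty := by
      rw [← Finset.card_pos]; omega
    obtain ⟨x, hx, hxach⟩ := exists_maxDegOn (G := G) hA'ne
    set A'' := A'.erase x with hA''
    have hng'' : ¬ goodOn G k A'' (b - (i+1)) := by
      intro hgood
      apply hng'
      have : b - i = (b - (i+1)) + 1 := by omega
      rw [this]
      exact goodOn_step hx hgood
    have hcr2 : crank G (k - (i+1)) A'' ≤ crank G (k - i) A' := by
      have h1 : 1 ≤ k - (i+1) := by omega
      have h2 : (k - (i+1)) + 1 = k - i := by omega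
      rw [← h2]
      exact crank_erase_max h1 hx hxach
    refine ⟨A'', ?_, ?_, hng'', ?_⟩
    · exact (Finset.erase_subset _ _).trans hsub
    · have h6 : 1 ≤ A'.card := Finset.card_pos.2 ⟨x, hx⟩
      have h5 : A''.card + 1 = A'.card := by
        rw [hA'', Finset.card_erase_of_mem hx]
        omega
      omega
    · exact hcr2.trans hcr

/-- Main induction. -/
lemma main (hF : G.IsAcyclic) (hk : 2 ≤ k) : ∀ (b : ℕ) (A : Finset V), b + k ≤ A.card →
    ¬ goodOn G k A b →
    theta (k-1) (b+1) ≤ 2 * (k-1)^2 * maxDegOn G A ∧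
      sumTheta (k-1) (b+1) ≤ (k-1)^2 * SD G A := by
  classical
  intro b
  induction b using Nat.strong_induction_on with
  | _ b ih =>
    intro A hA hng
    set P := k - 1 with hP
    have hP1 : 1 ≤ P := by omega
    obtain ⟨q, hq⟩ : ∃ q, P^2 = q := ⟨_, rfl⟩
    have hq1 : 1 ≤ q := by
      rw [← hq]
      exact Nat.one_le_pow _ _ (by omega)
    have hkA : k ≤ A.card := by omega
    have hAne : A.Nonempty := by
      rw [← Finset.card_pos]; omega
    set ck := crank G k A with hck
    set M := maxDegOn G A with hM
    set Hk := A.filter (fun v => ck + 1 ≤ degOn G A v) with hHk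
    have hHkcard : Hk.card ≤ P := by
      have h0 := crank_lt (G := G) (A := A) (j := k) (m := ck + 1) (by omega)
        (Nat.lt_succ_self ck)
      rw [hHk]
      omega
    have hHkA : Hk ⊆ A := Finset.filter_subset _ _
    -- loop failure
    have hloopfail : b + 1 ≤ P * (1 + ck) := by
      by_contra hcon
      push_neg at hcon
      apply hng
      set A' := A \ Hk with hA'
      have hdeg' : ∀ v ∈ A', degOn G A' v ≤ ck := by
        intro v hv
        obtain ⟨hvA, hvn⟩ := Finset.mem_sdiff.1 hv
        have h1 : degOn G A' v ≤ degOn G A v := degOn_mono Finset.sdiff_subset v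
        have h2 : ¬ (ck + 1 ≤ degOn G A v) := fun h => hvn (Finset.mem_filter.2 ⟨hvA, h⟩)
        omega
      obtain ⟨r, hr⟩ : ∃ r, (k-1) * ck = r := ⟨_, rfl⟩
      have hrP : P * ck = r := by rw [← hr, hP]
      have hbr : P + r ≤ b := by
        have hmul : P * (1 + ck) = P * ck + P := by ring
        omega
      have hcard' : (k-1) * ck + k ≤ A'.card := by
        have h1 : A'.card = A.card - Hk.card := Finset.card_sdiff_of_subset hHkA
        rw [hr]
        omega
      have hloop := loop (G := G) hk ck A' hdeg' hcard'
      obtain ⟨S, hS1, hS2, hS3⟩ := hloop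
      rw [hr] at hS2
      refine ⟨Hk ∪ S, ?_, ?_, ?_⟩
      · intro y hy
        rcases Finset.mem_union.1 hy with hy | hy
        · exact hHkA hy
        · exact Finset.sdiff_subset (hS1 hy)
      · refine (Finset.card_union_le _ _).trans ?_
        omega
      · have : A \ (Hk ∪ S) = A' \ S := by
          ext y
          simp only [hA', Finset.mem_sdiff, Finset.mem_union]
          tauto
        rwa [this]
    -- part alpha
    have halpha : theta P (b+1) ≤ 2 * P^2 * M := by
      by_cases hu : b + 1 ≤ 2*P^2 + P
      · have hz : theta P (b+1) = 0 := by
          unfold theta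
          rw [hq] at hu ⊢
          have : b + 1 - (2*q + P) = 0 := by omega
          rw [this, Nat.zero_mul]
        rw [hz]
        exact Nat.zero_le _
      · push_neg at hu
        have hu' : 2*q + P < b + 1 := by rw [← hq]; exact hu
        -- ck is large
        have hck2 : 2*P + 1 ≤ ck := by
          by_contra hle
          push_neg at hle
          have h1 : P * (1 + ck) ≤ P * (1 + 2*P) := by
            apply Nat.mul_le_mul_left
            omega
          have h2 : P * (1 + 2*P) = P + 2*q := by rw [← hq]; ring
          omega
        -- build the window W
        have hfil : k ≤ (A.filter fun v => ck ≤ degOn G A v).card := crank_spec hkA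
        have hHksub : Hk ⊆ A.filter (fun v => ck ≤ degOn G A v) := by
          intro v hv
          obtain ⟨h1, h2⟩ := Finset.mem_filter.1 hv
          exact Finset.mem_filter.2 ⟨h1, by omega⟩
        obtain ⟨W, hW1, hW2, hW3⟩ := Finset.exists_subsuperset_card_eq
          (n := k - Hk.card + Hk.card) hHksub (by omega) (by omega)
        have hWk : W.card = k := by omega
        have hWA : W ⊆ A := hW2.trans (Finset.filter_subset _ _)
        have hhi : ∀ v ∈ A, v ∉ W → degOn G A v ≤ ck := by
          intro v hv hvW
          have : v ∉ Hk := fun h => hvW (hW1 h)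
          have : ¬ (ck + 1 ≤ degOn G A v) := fun h =>
            this (Finset.mem_filter.2 ⟨hv, h⟩)
          omega
        have hlo : ∀ w ∈ W, ck ≤ degOn G A w := by
          intro w hw
          exact (Finset.mem_filter.1 (hW2 hw)).2
        -- trim failure
        have hT : b + 1 ≤ ∑ w ∈ W, (degOn G A w - ck) := by
          by_contra hcon
          push_neg at hcon
          exact hng (trim hF hk b A W ck hWA hWk (by omega) hhi hlo (by omega))
        -- bound on the trim sum
        have hTle : ∑ w ∈ W, (degOn G A w - ck) ≤ P * (M - ck) := by
          have hzero : ∀ w ∈ W, w ∉ Hk → degOn G A w - ck = 0 := by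
            intro w hw hwH
            have h1 := hlo w hw
            have h2 : ¬ (ck + 1 ≤ degOn G A w) := fun h =>
              hwH (Finset.mem_filter.2 ⟨hWA hw, h⟩)
            omega
          have hsplit : ∑ w ∈ W, (degOn G A w - ck)
              = ∑ w ∈ Hk, (degOn G A w - ck) := (Finset.sum_subset hW1 hzero).symm
          rw [hsplit]
          calc ∑ w ∈ Hk, (degOn G A w - ck) ≤ ∑ _w ∈ Hk, (M - ck) := by
                apply Finset.sum_le_sum
                intro w hw
                have := degOn_le_maxDegOn (G := G) (hHkA hw)
                omega
            _ = Hk.card * (M - ck) := by rw [Finset.sum_const, smul_eq_mul]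
            _ ≤ P * (M - ck) := Nat.mul_le_mul_right _ hHkcard
        have hMck : ck ≤ M := by
          have hWne : W.Nonempty := by
            rw [← Finset.card_pos]; omega
          obtain ⟨w, hw⟩ := hWne
          exact (hlo w hw).trans (degOn_le_maxDegOn (hWA hw))
        have hPM : P * ck + (b+1) ≤ P * M := by
          have hMeq : M = (M - ck) + ck := (Nat.sub_add_cancel hMck).symm
          have hexp : P * ((M - ck) + ck) = P * (M - ck) + P * ck := by ring
          rw [hMeq, hexp]
          omega
        -- iterate the deletion of maximum-degree vertices
        have hbP : P ≤ b := by omega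
        obtain ⟨A', hsub, hcardA', hng', hcr⟩ := iter (G := G) hk P (by omega) b A hng hbP hkA
        have hkP : k - P = 1 := by omega
        rw [hkP] at hcr
        have hA'ne : A'.Nonempty := by
          rw [← Finset.card_pos]; omega
        have hMle : maxDegOn G A' ≤ ck + P := by
          have h1 := maxDegOn_le_crank_one (G := G) hA'ne
          omega
        have hihA' := ih (b - P) (by omega) A' (by omega) hng'
        have halphaP : theta P (b - P + 1) ≤ 2 * P^2 * maxDegOn G A' := hihA'.1
        have hstep := theta_step (P := P) (u := b+1) hP1 hu
        have e1 : b + 1 - P = b - P + 1 := by omega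
        rw [e1] at hstep
        have c1 : theta P (b - P + 1) ≤ 2*P^2*(ck + P) :=
          halphaP.trans (Nat.mul_le_mul_left _ hMle)
        have c2 : 2*P^2*(ck+P) = 2*P^2*ck + 2*P^3 := by ring
        have c3 : 2*P*(P*ck + (b+1)) ≤ 2*P*(P*M) := Nat.mul_le_mul_left _ hPM
        have c4 : 2*P*(P*ck+(b+1)) = 2*P^2*ck + 2*P*(b+1) := by ring
        have c5 : 2*P*(P*M) = 2*P^2*M := by ring
        linarith [hstep, c1, c2, c3, c4, c5]
    -- part beta
    have hbeta : sumTheta P (b+1) ≤ P^2 * SD G A := by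
      rcases Nat.eq_zero_or_pos b with rfl | hb1
      · have hz : sumTheta P 1 = 0 := by
          unfold sumTheta theta
          rw [Finset.sum_range_one, hq]
          have : 0 + 1 - (2*q + P) = 0 := by omega
          rw [this, Nat.zero_mul]
        rw [hz]
        exact Nat.zero_le _
      · obtain ⟨x, hx, hxM⟩ := exists_maxDegOn (G := G) hAne
        have hng' : ¬ goodOn G k (A.erase x) (b-1) := by
          intro hgood
          apply hng
          have hb : b = (b-1)+1 := by omega
          rw [hb]
          exact goodOn_step hx hgood
        have hihx := ih (b-1) (by omega) (A.erase x)
          (by rw [Finset.card_erase_of_mem hx]; omega) hng'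
        have hb' : (b-1)+1 = b := by omega
        rw [hb'] at hihx
        have hSD := SD_erase (G := G) hx
        have hsplit : sumTheta P (b+1) = sumTheta P b + theta P (b+1) := sumTheta_succ P b
        have hfin : P^2 * SD G A = P^2 * SD G (A.erase x) + 2*P^2*(degOn G A x) := by
          rw [hSD]; ring
        rw [hxM, ← hM] at hfin
        linarith [hihx.2, halpha, hsplit, hfin]
    exact ⟨halpha, hbeta⟩

end Stmt11Aux

open Stmt11Aux in
theorem combi {V : Type*} [Fintype V] (F : SimpleGraph V) (hF : F.IsAcyclic)
    (k : ℕ) (hk : 2 ≤ k) (t : ℕ) (ht : 2*k - 1 ≤ t)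
    (htn : t^3 ≤ Fintype.card V) (hnt : Fintype.card V < (t+1)^3) :
    fk F k ≤ (2*k - 1) * t := by
  classical
  obtain ⟨p, rfl⟩ : ∃ p, k = p + 2 := ⟨k - 2, by omega⟩
  obtain ⟨s, rfl⟩ : ∃ s, t = 2*p + 3 + s := ⟨t - (2*p + 3), by omega⟩
  have h2k : 2*(p+2) - 1 = 2*p+3 := by omega
  rw [h2k]
  -- now the budget is B := (2*p+3) * (2*p+3+s)
  have hncard : (2*p+3) * (2*p+3+s) + (p+2) ≤ Fintype.card V := by
    have hident : (2*p+3+s)^3 = ((2*p+3) * (2*p+3+s) + (p+2))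
        + (16 + 24*s + 9*s^2 + s^3 + 41*p + 34*p*s + 6*p*s^2 + 32*p^2
            + 12*p^2*s + 8*p^3) := by ring
    have h2 : (2*p+3) * (2*p+3+s) + (p+2) ≤ (2*p+3+s)^3 := by
      rw [hident]
      omega
    exact h2.trans htn
  have hgood : goodOn F (p+2) (Finset.univ : Finset V) ((2*p+3) * (2*p+3+s)) := by
    by_contra hng
    have hcard : (2*p+3) * (2*p+3+s) + (p+2) ≤ (Finset.univ : Finset V).card := by
      rw [Finset.card_univ]
      exact hncard
    have hmain := (main hF (by omega) ((2*p+3) * (2*p+3+s)) Finset.univ hcard hng).2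
    have hP1 : p + 2 - 1 = p + 1 := by omega
    rw [hP1] at hmain
    have hVne : (Finset.univ : Finset V).Nonempty := by
      rw [← Finset.card_pos, Finset.card_univ]
      omega
    have hSD : SD F Finset.univ + 2 ≤ 2 * Fintype.card V := by
      have := SD_le (G := F) hF hVne
      rwa [Finset.card_univ] at this
    have hidx : 2*(p+1)^2 + (p+1) + (2*p^2 + 7*p + 7 + (2*p+3)*s)
        = (2*p+3) * (2*p+3+s) + 1 := by ring
    have hST := sumTheta_ge (p+1) (2*p^2 + 7*p + 7 + (2*p+3)*s)
    rw [hidx] at hST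
    obtain ⟨c, hc⟩ : ∃ c, (2*p+4+s)^3 = c := ⟨_, rfl⟩
    have hcge : 64 ≤ c := by
      rw [← hc]
      calc (64:ℕ) = 4^3 := by norm_num
        _ ≤ (2*p+4+s)^3 := Nat.pow_le_pow_left (by omega) 3
    have hnc : Fintype.card V < c := by
      have he : (2*p+3+s) + 1 = 2*p+4+s := by omega
      rw [← hc, ← he]
      exact hnt
    obtain ⟨Qv, hQv⟩ : ∃ Qv, 2*p^2 + 7*p + 7 + (2*p+3)*s = Qv := ⟨_, rfl⟩
    rw [hQv] at hST
    have hiden : Qv*(Qv+1)*(2*Qv+1) + 3*((p+1)^2+(p+1))*Qv*(Qv+1) + 24*(p+1)^2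
        = 12*(p+1)^2*c +
        (432 + 705*s + 315*s^2 + 42*s^3 + 853*p + 1673*p*s + 711*p*s^2 + 84*p*s^3
          + 842*p^2 + 1833*p^2*s + 663*p^2*s^2 + 60*p^2*s^3 + 740*p^3 + 1212*p^3*s
          + 312*p^3*s^2 + 16*p^3*s^3 + 513*p^4 + 456*p^4*s + 60*p^4*s^2
          + 192*p^5 + 72*p^5*s + 28*p^6) := by
      rw [← hc, ← hQv]
      ring
    have c2 : (p+1)^2 * SD F Finset.univ ≤ (p+1)^2 * (2*(Fintype.card V) - 2) :=
      Nat.mul_le_mul_left _ (by omega)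
    have c3 : 6 * ((p+1)^2 * (2*(Fintype.card V)-2)) = 12*(p+1)^2*(Fintype.card V - 1) := by
      have h4 : 2*(Fintype.card V) - 2 = 2*(Fintype.card V - 1) := by omega
      rw [h4]
      ring
    have c4 : 12*(p+1)^2*(Fintype.card V - 1) ≤ 12*(p+1)^2*(c-2) :=
      Nat.mul_le_mul_left _ (by omega)
    have c5 : 12*(p+1)^2*(c-2) + 24*(p+1)^2 = 12*(p+1)^2*c := by
      have h6 : 12*(p+1)^2*(c-2) + 24*(p+1)^2 = 12*(p+1)^2*((c-2)+2) := by ring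
      rw [h6, show c - 2 + 2 = c by omega]
    have hup : Qv*(Qv+1)*(2*Qv+1) + 3*((p+1)^2+(p+1))*Qv*(Qv+1) ≤ 12*(p+1)^2*(c-2) := by
      calc Qv*(Qv+1)*(2*Qv+1) + 3*((p+1)^2+(p+1))*Qv*(Qv+1)
          ≤ 6 * sumTheta (p+1) ((2*p+3) * (2*p+3+s) + 1) := hST
        _ ≤ 6 * ((p+1)^2 * SD F Finset.univ) := Nat.mul_le_mul_left _ hmain
        _ ≤ 6 * ((p+1)^2 * (2*(Fintype.card V)-2)) := Nat.mul_le_mul_left _ c2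
        _ = 12*(p+1)^2*(Fintype.card V - 1) := c3
        _ ≤ 12*(p+1)^2*(c-2) := c4
    omega
  obtain ⟨S, hS1, hS2, hS3⟩ := hgood
  have hmem : S.card ∈ {m | ∃ S', S' ⊆ (Finset.univ : Finset V) ∧ S'.card = m ∧
      equates F (p+2) (Finset.univ \ S')} := ⟨S, hS1, rfl, hS3⟩
  exact (Nat.sInf_le hmem).trans hS2

/-- If `k ≥ 2` and `F` is a forest on `n` vertices with
`n^(1/3) ≥ 2k - 1`, then `f_k(F) ≤ (2k - 1) · ⌊n^(1/3)⌋`. -/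
theorem stmt11 {V : Type*} [Fintype V] (F : SimpleGraph V) (hF : F.IsAcyclic)
    (k : ℕ) (hk : 2 ≤ k)
    (hn : 2 * (k : ℝ) - 1 ≤ (Fintype.card V : ℝ) ^ ((1 : ℝ) / 3)) :
    (fk F k : ℤ) ≤ (2 * (k : ℤ) - 1) * ⌊(Fintype.card V : ℝ) ^ ((1 : ℝ) / 3)⌋ := by
  classical
  set n := Fintype.card V with hndef
  set x := (n : ℝ) ^ ((1 : ℝ)/3) with hxdef
  have hx0 : (0:ℝ) ≤ x := Real.rpow_nonneg (Nat.cast_nonneg _) _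
  have hx3 : x^(3:ℕ) = (n:ℝ) := by
    rw [hxdef, ← Real.rpow_natCast ((n:ℝ) ^ ((1:ℝ)/3)) 3, ← Real.rpow_mul (Nat.cast_nonneg n)]
    norm_num
  set t := ⌊x⌋₊ with htdef
  have hkt : 2*k - 1 ≤ t := by
    apply Nat.le_floor
    have hcast : ((2*k-1:ℕ):ℝ) = 2*(k:ℝ)-1 := by
      have h1 : 1 ≤ 2*k := by omega
      push_cast [Nat.cast_sub h1]
      ring
    rw [hcast]
    exact hn
  have ht3 : t^3 ≤ n := by
    have h1 : (t:ℝ) ≤ x := Nat.floor_le hx0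
    have h2 : ((t^3 : ℕ):ℝ) ≤ (n:ℝ) := by
      push_cast
      calc (t:ℝ)^3 ≤ x^3 := by
            exact pow_le_pow_left₀ (by positivity) h1 3
        _ = (n:ℝ) := hx3
    exact_mod_cast h2
  have hn3 : n < (t+1)^3 := by
    have h1 : x < t+1 := Nat.lt_floor_add_one x
    have h2 : (n:ℝ) < ((t+1:ℕ):ℝ)^3 := by
      rw [← hx3]
      push_cast
      exact pow_lt_pow_left₀ h1 hx0 (by norm_num)
    exact_mod_cast h2
  have hfk := combi F hF k hk t hkt ht3 hn3
  have hfloor : ⌊x⌋ = (t : ℤ) := by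
    rw [htdef]
    rw [← Int.floor_toNat, Int.toNat_of_nonneg (Int.floor_nonneg.2 hx0)]
  rw [hfloor]
  calc (fk F k : ℤ) ≤ (((2*k-1)*t : ℕ) : ℤ) := by exact_mod_cast hfk
    _ = (2*(k:ℤ)-1) * (t:ℤ) := by
        have h1 : 1 ≤ 2*k := by omega
        push_cast [Nat.cast_sub h1]
        ring
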